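/- arXiv:2110.13604 — 2 statements merged into one kernel-verified Lean document; each statement's English description precedes it below -/
import Mathlib

section
/- Pointwise form of Proposition 2.1 (transformed bending energy density): Let ω ⊆ ℝ² be open, let ψ_A, ψ_B : ℝ² → ℝ³ be twice continuously differentiable on ω, and suppose the metric constraint (∇ψ_B(y))ᵀ∇ψ_B(y) = (∇ψ_A(y))ᵀ∇ψ_A(y) holds for all y ∈ ω. Let x ∈ ω be such that ∂₁ψ_A(x) × ∂₂ψ_A(x) ≠ 0 and ∂₁ψ_B(x) × ∂₂ψ_B(x) ≠ 0, and write g = g[ψ_A](x), II_A = II[ψ_A](x), II_B = II[ψ_B](x). Then |g^{-1/2}(II_B − II_A)g^{-1/2}|² = Σ_{m=1}^{3} |g^{-1/2} D²ψ_Bᵐ(x) g^{-1/2}|² − 2 II_B : (g⁻¹ II_A g⁻¹) + C_A(x), where C_A(x) = 2 |g^{-1/2} II_A g^{-1/2}|² − Σ_{m=1}^{3} |g^{-1/2} D²ψ_Aᵐ(x) g^{-1/2}|² depends only on ψ_A. -/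
open Matrix MeasureTheory

noncomputable section

/-- `i`-th partial derivative of `ψ : ℝ² → ℝ³` at `x`. -/
def pd (ψ : (Fin 2 → ℝ) → (Fin 3 → ℝ)) (i : Fin 2) (x : Fin 2 → ℝ) : Fin 3 → ℝ :=
  fderiv ℝ ψ x (Pi.single i 1)

/-- Jacobian matrix `∇ψ(x) ∈ ℝ^{3×2}`. -/
def jac (ψ : (Fin 2 → ℝ) → (Fin 3 → ℝ)) (x : Fin 2 → ℝ) : Matrix (Fin 3) (Fin 2) ℝ :=
  Matrix.of fun m i => pd ψ i x m

/-- First fundamental form `g[ψ](x) = (∇ψ(x))ᵀ ∇ψ(x)`. -/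
def met (ψ : (Fin 2 → ℝ) → (Fin 3 → ℝ)) (x : Fin 2 → ℝ) : Matrix (Fin 2) (Fin 2) ℝ :=
  (jac ψ x)ᵀ * jac ψ x

/-- Euclidean inner product on `ℝ³`. -/
def dot3 (u v : Fin 3 → ℝ) : ℝ := ∑ m, u m * v m

/-- Euclidean norm on `ℝ³`. -/
def norm3 (u : Fin 3 → ℝ) : ℝ := Real.sqrt (dot3 u u)

/-- Cross product `∂₁ψ(x) × ∂₂ψ(x)`. -/
def crossPsi (ψ : (Fin 2 → ℝ) → (Fin 3 → ℝ)) (x : Fin 2 → ℝ) : Fin 3 → ℝ :=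
  crossProduct (pd ψ 0 x) (pd ψ 1 x)

/-- Unit normal `n[ψ](x)`. -/
def nrm (ψ : (Fin 2 → ℝ) → (Fin 3 → ℝ)) (x : Fin 2 → ℝ) : Fin 3 → ℝ :=
  (norm3 (crossPsi ψ x))⁻¹ • crossPsi ψ x

/-- Second partial derivative `∂ᵢ∂ⱼψ(x)`. -/
def pd2 (ψ : (Fin 2 → ℝ) → (Fin 3 → ℝ)) (i j : Fin 2) (x : Fin 2 → ℝ) : Fin 3 → ℝ :=
  pd (pd ψ j) i x

/-- Hessian `D²ψᵐ(x)` of the `m`-th component. -/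
def hess (ψ : (Fin 2 → ℝ) → (Fin 3 → ℝ)) (m : Fin 3) (x : Fin 2 → ℝ) :
    Matrix (Fin 2) (Fin 2) ℝ :=
  Matrix.of fun i j => pd2 ψ i j x m

/-- Second fundamental form `II[ψ](x)ᵢⱼ = ∂ᵢ∂ⱼψ(x)·n[ψ](x)`. -/
def sff (ψ : (Fin 2 → ℝ) → (Fin 3 → ℝ)) (x : Fin 2 → ℝ) : Matrix (Fin 2) (Fin 2) ℝ :=
  Matrix.of fun i j => dot3 (pd2 ψ i j x) (nrm ψ x)

/-- Frobenius inner product `A : B`. -/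
def frob {n : Type*} [Fintype n] (A B : Matrix n n ℝ) : ℝ := ∑ i, ∑ j, A i j * B i j

/-- Gram–Schmidt frame vector `y¹[ψ](x)`. -/
def y1 (ψ : (Fin 2 → ℝ) → (Fin 3 → ℝ)) (x : Fin 2 → ℝ) : Fin 3 → ℝ :=
  (norm3 (pd ψ 0 x))⁻¹ • pd ψ 0 x

/-- Gram–Schmidt vector `ŷ²[ψ](x)` (before normalization). -/
def yhat2 (ψ : (Fin 2 → ℝ) → (Fin 3 → ℝ)) (x : Fin 2 → ℝ) : Fin 3 → ℝ :=
  pd ψ 1 x - (dot3 (pd ψ 1 x) (y1 ψ x)) • y1 ψ x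

/-- Gram–Schmidt frame vector `y²[ψ](x)`. -/
def y2 (ψ : (Fin 2 → ℝ) → (Fin 3 → ℝ)) (x : Fin 2 → ℝ) : Fin 3 → ℝ :=
  (norm3 (yhat2 ψ x))⁻¹ • yhat2 ψ x

/-! ### Auxiliary lemmas -/

lemma dot3_comm (u v : Fin 3 → ℝ) : dot3 u v = dot3 v u := by
  simp [dot3, mul_comm]

lemma dot3_smul_right (r : ℝ) (u v : Fin 3 → ℝ) : dot3 u (r • v) = r * dot3 u v := by
  simp [dot3, Finset.mul_sum, mul_comm, mul_left_comm]

lemma lagrange (t0 t1 : Fin 3 → ℝ) :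
    dot3 (crossProduct t0 t1) (crossProduct t0 t1)
      = dot3 t0 t0 * dot3 t1 t1 - dot3 t0 t1 * dot3 t1 t0 := by
  simp [dot3, cross_apply, Fin.sum_univ_three]; ring

lemma core (t0 t1 u v : Fin 3 → ℝ) :
    dot3 u v * dot3 (crossProduct t0 t1) (crossProduct t0 t1)
      = dot3 u (crossProduct t0 t1) * dot3 v (crossProduct t0 t1)
        + (dot3 u t0 * dot3 v t0 * dot3 t1 t1 - dot3 u t0 * dot3 v t1 * dot3 t0 t1
            - dot3 u t1 * dot3 v t0 * dot3 t1 t0 + dot3 u t1 * dot3 v t1 * dot3 t0 t0) := by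
  simp [dot3, cross_apply, Fin.sum_univ_three]; ring

lemma dot3_self_pos {u : Fin 3 → ℝ} (hu : u ≠ 0) : 0 < dot3 u u := by
  rcases lt_or_eq_of_le (Finset.sum_nonneg fun i _ => mul_self_nonneg (u i) :
      (0:ℝ) ≤ dot3 u u) with h | h
  · exact h
  · exfalso; apply hu; funext m
    have h0 : ∑ m, u m * u m = 0 := h.symm
    have := (Finset.sum_eq_zero_iff_of_nonneg (fun i _ => mul_self_nonneg (u i))).1 h0 m (by simp)
    have := mul_self_eq_zero.1 this
    simpa using this

/-- Decomposition of the inner product of `ℝ³` in the frame given by two tangent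
vectors (with Gram matrix `g`) and the unit normal. -/
lemma key (t0 t1 u v : Fin 3 → ℝ) (hc : (crossProduct t0 t1 : Fin 3 → ℝ) ≠ 0) :
    dot3 u v
      = dot3 u ((norm3 (crossProduct t0 t1))⁻¹ • (crossProduct t0 t1))
        * dot3 v ((norm3 (crossProduct t0 t1))⁻¹ • (crossProduct t0 t1))
        + (dot3 t0 t0 * dot3 t1 t1 - dot3 t0 t1 * dot3 t1 t0)⁻¹ *
          (dot3 u t0 * dot3 v t0 * dot3 t1 t1 - dot3 u t0 * dot3 v t1 * dot3 t0 t1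
            - dot3 u t1 * dot3 v t0 * dot3 t1 t0 + dot3 u t1 * dot3 v t1 * dot3 t0 t0) := by
  set c : Fin 3 → ℝ := crossProduct t0 t1 with hcdef
  have hpos : 0 < dot3 c c := dot3_self_pos hc
  have hsq : (norm3 c) * (norm3 c) = dot3 c c := Real.mul_self_sqrt hpos.le
  rw [dot3_smul_right, dot3_smul_right, ← lagrange]
  have h1 : (norm3 c)⁻¹ * dot3 u c * ((norm3 c)⁻¹ * dot3 v c)
      = (dot3 c c)⁻¹ * (dot3 u c * dot3 v c) := by
    rw [← hsq]
    have hn : norm3 c ≠ 0 := by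
      intro h; rw [h, zero_mul] at hsq; exact hpos.ne hsq
    field_simp
  rw [h1]
  rw [inv_mul_eq_div, inv_mul_eq_div, ← add_div, eq_div_iff hpos.ne']
  linarith [core t0 t1 u v]

/-- Christoffel-type quantity `Γ_{ij,k} = ∂ᵢ∂ⱼψ · ∂ₖψ`. -/
def Gam (ψ : (Fin 2 → ℝ) → (Fin 3 → ℝ)) (x : Fin 2 → ℝ) (i j k : Fin 2) : ℝ :=
  dot3 (pd2 ψ i j x) (pd ψ k x)

def Tmat (M : Matrix (Fin 2) (Fin 2) ℝ) (Γ : Fin 2 → Fin 2 → Fin 2 → ℝ) (k l κ : Fin 2) : ℝ :=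
  ∑ i, ∑ j, M k i * Γ i j κ * M j l

/-- Tangential contribution to the transformed Hessian square, depending only on
the metric and the Christoffel data. -/
def Ffun (g : Matrix (Fin 2) (Fin 2) ℝ) (Γ : Fin 2 → Fin 2 → Fin 2 → ℝ)
    (M : Matrix (Fin 2) (Fin 2) ℝ) : ℝ :=
  ∑ k, ∑ l,
    (g 0 0 * g 1 1 - g 0 1 * g 1 0)⁻¹ *
      (Tmat M Γ k l 0 * Tmat M Γ k l 0 * g 1 1 - Tmat M Γ k l 0 * Tmat M Γ k l 1 * g 0 1
        - Tmat M Γ k l 1 * Tmat M Γ k l 0 * g 1 0 + Tmat M Γ k l 1 * Tmat M Γ k l 1 * g 0 0)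

lemma met_apply (ψ : (Fin 2 → ℝ) → (Fin 3 → ℝ)) (x : Fin 2 → ℝ) (i j : Fin 2) :
    met ψ x i j = dot3 (pd ψ i x) (pd ψ j x) := by
  simp [met, Matrix.mul_apply, jac, dot3]

/-- The transformed squared Hessian decomposes into a second-fundamental-form part
and a purely metric (Christoffel) part. -/
lemma step2 (ψ : (Fin 2 → ℝ) → (Fin 3 → ℝ)) (x : Fin 2 → ℝ) (hc : crossPsi ψ x ≠ 0)
    (M : Matrix (Fin 2) (Fin 2) ℝ) :
    (∑ m, frob (M * hess ψ m x * M) (M * hess ψ m x * M))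
      = frob (M * sff ψ x * M) (M * sff ψ x * M) + Ffun (met ψ x) (Gam ψ x) M := by
  set W : Fin 2 → Fin 2 → Fin 3 → ℝ :=
    fun k l m => ∑ i, ∑ j, M k i * pd2 ψ i j x m * M j l with hW
  have hWdot : ∀ k l (z : Fin 3 → ℝ),
      dot3 (W k l) z = ∑ i, ∑ j, M k i * dot3 (pd2 ψ i j x) z * M j l := by
    intro k l z
    simp only [hW, dot3, Fin.sum_univ_two, Fin.sum_univ_three]
    ring
  have hmul : ∀ (A : Matrix (Fin 2) (Fin 2) ℝ) (k l : Fin 2),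
      (M * A * M) k l = ∑ i, ∑ j, M k i * A i j * M j l := by
    intro A k l
    simp only [Matrix.mul_apply, Fin.sum_univ_two]
    ring
  have hWentry : ∀ (m : Fin 3) (k l : Fin 2), (M * hess ψ m x * M) k l = W k l m := by
    intro m k l
    rw [hmul]
    rfl
  have h1 : (∑ m, frob (M * hess ψ m x * M) (M * hess ψ m x * M))
      = ∑ k, ∑ l, dot3 (W k l) (W k l) := by
    simp only [frob, hWentry, dot3]
    rw [Finset.sum_comm]
    exact Finset.sum_congr rfl fun k _ => Finset.sum_comm
  have hsffW : ∀ k l, dot3 (W k l) (nrm ψ x) = (M * sff ψ x * M) k l := by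
    intro k l
    rw [hWdot, hmul]
    rfl
  have hTW : ∀ k l κ, dot3 (W k l) (pd ψ κ x) = Tmat M (Gam ψ x) k l κ := by
    intro k l κ
    rw [hWdot]
    rfl
  have h2 : ∀ k l, dot3 (W k l) (W k l)
      = (M * sff ψ x * M) k l * ((M * sff ψ x * M) k l)
        + ((met ψ x) 0 0 * (met ψ x) 1 1 - (met ψ x) 0 1 * (met ψ x) 1 0)⁻¹ *
          (Tmat M (Gam ψ x) k l 0 * Tmat M (Gam ψ x) k l 0 * (met ψ x) 1 1
            - Tmat M (Gam ψ x) k l 0 * Tmat M (Gam ψ x) k l 1 * (met ψ x) 0 1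
            - Tmat M (Gam ψ x) k l 1 * Tmat M (Gam ψ x) k l 0 * (met ψ x) 1 0
            + Tmat M (Gam ψ x) k l 1 * Tmat M (Gam ψ x) k l 1 * (met ψ x) 0 0) := by
    intro k l
    have hk := key (pd ψ 0 x) (pd ψ 1 x) (W k l) (W k l) hc
    rw [hk]
    rw [show ((norm3 (crossProduct (pd ψ 0 x) (pd ψ 1 x)))⁻¹
        • (crossProduct (pd ψ 0 x) (pd ψ 1 x)) : Fin 3 → ℝ) = nrm ψ x
        from by simp only [nrm, crossPsi]]
    rw [hsffW, hTW, hTW, met_apply, met_apply, met_apply, met_apply]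
  rw [h1]
  simp only [frob, Ffun, ← Finset.sum_add_distrib]
  exact Finset.sum_congr rfl fun k _ => Finset.sum_congr rfl fun l _ => h2 k l

section Analysis
variable {ω : Set (Fin 2 → ℝ)} {ψ : (Fin 2 → ℝ) → (Fin 3 → ℝ)} {x : Fin 2 → ℝ}

lemma pd_contDiffOn (hω : IsOpen ω) (hψ : ContDiffOn ℝ 2 ψ ω) (a : Fin 2) :
    ContDiffOn ℝ 1 (pd ψ a) ω := by
  have h := hψ.fderiv_of_isOpen (m := 1) hω (by norm_num : (1:WithTop ℕ∞) + 1 ≤ 2)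
  exact h.clm_apply contDiffOn_const

lemma pd_diffAt (hω : IsOpen ω) (hψ : ContDiffOn ℝ 2 ψ ω) (hx : x ∈ ω) (a : Fin 2) :
    DifferentiableAt ℝ (pd ψ a) x :=
  ((pd_contDiffOn hω hψ a).differentiableOn one_ne_zero).differentiableAt (hω.mem_nhds hx)

/-- Schwarz symmetry of second partial derivatives. -/
lemma pd2_symm (hω : IsOpen ω) (hψ : ContDiffOn ℝ 2 ψ ω) (hx : x ∈ ω) (i j : Fin 2) :
    pd2 ψ i j x = pd2 ψ j i x := by
  have hψx : ContDiffAt ℝ 2 ψ x := (hψ x hx).contDiffAt (hω.mem_nhds hx)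
  have hd : DifferentiableAt ℝ (fderiv ℝ ψ) x :=
    (hψx.fderiv_right (m := 1) le_rfl).differentiableAt one_ne_zero
  have hsym := hψx.isSymmSndFDerivAt (by simp)
  have key : ∀ a b : Fin 2,
      pd2 ψ a b x = fderiv ℝ (fderiv ℝ ψ) x (Pi.single a 1) (Pi.single b 1) := by
    intro a b
    show fderiv ℝ (fun y => fderiv ℝ ψ y (Pi.single b 1)) x (Pi.single a 1) = _
    rw [fderiv_clm_apply hd (differentiableAt_const _)]
    simp
  rw [key i j, key j i, hsym]

/-- Product-rule formula for the derivative of a metric entry. -/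
lemma fderiv_metric_entry (hω : IsOpen ω) (hψ : ContDiffOn ℝ 2 ψ ω) (hx : x ∈ ω)
    (a b i : Fin 2) :
    fderiv ℝ (fun y => dot3 (pd ψ a y) (pd ψ b y)) x (Pi.single i 1)
      = Gam ψ x i a b + Gam ψ x i b a := by
  have hFa := (pd_diffAt hω hψ hx a).hasFDerivAt
  have hFb := (pd_diffAt hω hψ hx b).hasFDerivAt
  set Da := fderiv ℝ (pd ψ a) x with hDa
  set Db := fderiv ℝ (pd ψ b) x with hDb
  have hm : ∀ m : Fin 3, HasFDerivAt (fun y => pd ψ a y m * pd ψ b y m)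
      (pd ψ a x m • ((ContinuousLinearMap.proj m).comp Db)
        + pd ψ b x m • ((ContinuousLinearMap.proj m).comp Da)) x := by
    intro m
    exact ((ContinuousLinearMap.proj (R := ℝ) (φ := fun _ : Fin 3 => ℝ) m).hasFDerivAt.comp x hFa).mul
      ((ContinuousLinearMap.proj (R := ℝ) (φ := fun _ : Fin 3 => ℝ) m).hasFDerivAt.comp x hFb)
  have hsum : HasFDerivAt (fun y => dot3 (pd ψ a y) (pd ψ b y))
      (∑ m : Fin 3, (pd ψ a x m • ((ContinuousLinearMap.proj m).comp Db)
        + pd ψ b x m • ((ContinuousLinearMap.proj m).comp Da))) x := by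
    have := HasFDerivAt.fun_sum (fun m (_ : m ∈ Finset.univ) => hm m)
    simpa [dot3] using this
  rw [hsum.fderiv]
  have hDa' : ∀ m, Da (Pi.single i 1) m = pd2 ψ i a x m := fun m => rfl
  have hDb' : ∀ m, Db (Pi.single i 1) m = pd2 ψ i b x m := fun m => rfl
  simp only [ContinuousLinearMap.sum_apply, ContinuousLinearMap.add_apply,
    ContinuousLinearMap.smul_apply, ContinuousLinearMap.comp_apply,
    ContinuousLinearMap.proj_apply, smul_eq_mul, Gam, dot3]
  rw [Finset.sum_add_distrib, add_comm]
  congr 1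
  · exact Finset.sum_congr rfl fun m _ => by rw [hDa']; ring
  · exact Finset.sum_congr rfl fun m _ => by rw [hDb']; ring

end Analysis

/-- Equality of the Christoffel data for two isometric immersions. -/
lemma gam_eq {ω : Set (Fin 2 → ℝ)} (hω : IsOpen ω)
    {ψA ψB : (Fin 2 → ℝ) → (Fin 3 → ℝ)}
    (hA : ContDiffOn ℝ 2 ψA ω) (hB : ContDiffOn ℝ 2 ψB ω)
    (hmet : ∀ y ∈ ω, met ψB y = met ψA y)
    {x : Fin 2 → ℝ} (hx : x ∈ ω) (i j k : Fin 2) :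
    Gam ψB x i j k = Gam ψA x i j k := by
  have hder : ∀ a b i : Fin 2,
      Gam ψB x i a b + Gam ψB x i b a = Gam ψA x i a b + Gam ψA x i b a := by
    intro a b i
    rw [← fderiv_metric_entry hω hB hx a b i, ← fderiv_metric_entry hω hA hx a b i]
    have hfun : (fun y => dot3 (pd ψB a y) (pd ψB b y))
        =ᶠ[nhds x] (fun y => dot3 (pd ψA a y) (pd ψA b y)) := by
      refine Filter.eventuallyEq_of_mem (hω.mem_nhds hx) fun y hy => ?_
      show dot3 (pd ψB a y) (pd ψB b y) = dot3 (pd ψA a y) (pd ψA b y)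
      rw [← met_apply, ← met_apply, hmet y hy]
    rw [hfun.fderiv_eq]
  have hsB : ∀ i j k : Fin 2, Gam ψB x i j k = Gam ψB x j i k := by
    intro i j k; unfold Gam; rw [pd2_symm hω hB hx]
  have hsA : ∀ i j k : Fin 2, Gam ψA x i j k = Gam ψA x j i k := by
    intro i j k; unfold Gam; rw [pd2_symm hω hA hx]
  have h1 := hder j k i
  have h2 := hder i k j
  have h3 := hder i j k
  linarith [hsB i k j, hsB j i k, hsB j k i, hsA i k j, hsA j i k, hsA j k i]

lemma frob_expand_sub (X Y : Matrix (Fin 2) (Fin 2) ℝ) :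
    frob (X - Y) (X - Y) = frob X X - 2 * frob X Y + frob Y Y := by
  simp [frob, Fin.sum_univ_two, Matrix.sub_apply]; ring

/-- Moving the symmetric square-root factors onto the other matrix in the
Frobenius pairing. -/
lemma frob_move (s A B : Matrix (Fin 2) (Fin 2) ℝ) (hsymm : s 0 1 = s 1 0) :
    frob (s⁻¹ * B * s⁻¹) (s⁻¹ * A * s⁻¹) = frob B ((s * s)⁻¹ * A * (s * s)⁻¹) := by
  set M := s⁻¹ with hM
  have hst : sᵀ = s := by
    ext i j
    fin_cases i <;> fin_cases j <;> simp [Matrix.transpose_apply, hsymm]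
  have hMt : Mᵀ = M := by rw [hM, Matrix.transpose_nonsing_inv, hst]
  have hMsymm : M 0 1 = M 1 0 := (congrFun (congrFun hMt 0) 1).symm
  rw [show (s * s)⁻¹ = M * M from by rw [hM, Matrix.mul_inv_rev]]
  simp only [frob, Matrix.mul_apply, Fin.sum_univ_two]
  rw [hMsymm]
  ring

/-- pointwise form of Proposition 2.1, the transformed bending
energy density. Here `s` is the unique positive definite square root of
`g = g[ψ_A](x)`, so `s⁻¹ = g^{-1/2}`. -/
theorem transformed_bending_energy_density
    (ω : Set (Fin 2 → ℝ)) (hω : IsOpen ω)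
    (ψA ψB : (Fin 2 → ℝ) → (Fin 3 → ℝ))
    (hA : ContDiffOn ℝ 2 ψA ω) (hB : ContDiffOn ℝ 2 ψB ω)
    (hmet : ∀ y ∈ ω, met ψB y = met ψA y)
    (x : Fin 2 → ℝ) (hx : x ∈ ω)
    (hcA : crossPsi ψA x ≠ 0) (hcB : crossPsi ψB x ≠ 0)
    (s : Matrix (Fin 2) (Fin 2) ℝ) (hs : s.PosDef) (hss : s * s = met ψA x) :
    frob (s⁻¹ * (sff ψB x - sff ψA x) * s⁻¹)
         (s⁻¹ * (sff ψB x - sff ψA x) * s⁻¹)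
      = (∑ m, frob (s⁻¹ * hess ψB m x * s⁻¹) (s⁻¹ * hess ψB m x * s⁻¹))
        - 2 * frob (sff ψB x) ((met ψA x)⁻¹ * sff ψA x * (met ψA x)⁻¹)
        + (2 * frob (s⁻¹ * sff ψA x * s⁻¹) (s⁻¹ * sff ψA x * s⁻¹)
            - ∑ m, frob (s⁻¹ * hess ψA m x * s⁻¹) (s⁻¹ * hess ψA m x * s⁻¹)) := by
  have hg : met ψB x = met ψA x := hmet x hx
  have hssymm : s 0 1 = s 1 0 := by
    have h := congrFun (congrFun hs.1.eq 0) 1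
    simpa [Matrix.conjTranspose_apply] using h.symm
  have hB2 := step2 ψB x hcB s⁻¹
  have hA2 := step2 ψA x hcA s⁻¹
  have hgam : Gam ψB x = Gam ψA x :=
    funext fun i => funext fun j => funext fun k => gam_eq hω hA hB hmet hx i j k
  rw [hg, hgam] at hB2
  have hmove := frob_move s (sff ψA x) (sff ψB x) hssymm
  rw [hss] at hmove
  have hexp : frob (s⁻¹ * (sff ψB x - sff ψA x) * s⁻¹) (s⁻¹ * (sff ψB x - sff ψA x) * s⁻¹)
      = frob (s⁻¹ * sff ψB x * s⁻¹) (s⁻¹ * sff ψB x * s⁻¹)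
        - 2 * frob (s⁻¹ * sff ψB x * s⁻¹) (s⁻¹ * sff ψA x * s⁻¹)
        + frob (s⁻¹ * sff ψA x * s⁻¹) (s⁻¹ * sff ψA x * s⁻¹) := by
    rw [show s⁻¹ * (sff ψB x - sff ψA x) * s⁻¹
        = s⁻¹ * sff ψB x * s⁻¹ - s⁻¹ * sff ψA x * s⁻¹ from by noncomm_ring]
    exact frob_expand_sub _ _
  linarith [hB2, hA2, hexp, hmove]

end
end

section
/- First variation of the unit normal: Let ψ, v : ℝ² → ℝ³ be differentiable at x ∈ ℝ² with ∂₁ψ(x) × ∂₂ψ(x) ≠ 0. Then the map t ↦ n[ψ + t v](x) is differentiable at t = 0 with derivative −∇ψ(x) · (g[ψ](x))⁻¹ · (∇v(x))ᵀ · n[ψ](x), i.e. the 3×2 matrix ∇ψ(x) times the inverse 2×2 metric times the 2×3 matrix (∇v(x))ᵀ applied to the vector n[ψ](x), with a minus sign. -/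
open Matrix MeasureTheory

noncomputable section

set_option maxHeartbeats 1000000 in
private lemma key_aux (a b p q : Fin 3 → ℝ) (m : Fin 3) :
    ((Matrix.of (fun m i => ![a, b] i m) *
      ((Matrix.of (fun m i => ![a, b] i m))ᵀ * Matrix.of (fun m i => ![a, b] i m)).adjugate *
      (Matrix.of (fun m i => ![p, q] i m))ᵀ) *ᵥ crossProduct a b) m
    = (∑ k, (crossProduct a b) k * (crossProduct p b + crossProduct a q) k) * (crossProduct a b) m
      - (∑ k, (crossProduct a b) k * (crossProduct a b) k) * (crossProduct p b + crossProduct a q) m := by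
  fin_cases m <;>
  · simp only [Matrix.adjugate_fin_two, Matrix.mul_apply, Matrix.mulVec, dotProduct,
      Fin.sum_univ_two, Fin.sum_univ_three, Matrix.transpose_apply, Matrix.of_apply,
      cross_apply, Matrix.cons_val', Matrix.cons_val_zero, Matrix.cons_val_one,
      Matrix.head_cons, Matrix.empty_val', Matrix.cons_val_fin_one, Matrix.head_fin_const,
      Fin.isValue, Matrix.cons_val_two, Matrix.tail_cons, Fin.zero_eta, Fin.mk_one,
      Fin.reduceFinMk, Pi.add_apply]
    ring

/-- First variation of the unit normal:
`t ↦ n[ψ + t v](x)` is differentiable at `t = 0` with derivative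
`−∇ψ(x) (g[ψ](x))⁻¹ (∇v(x))ᵀ n[ψ](x)`. -/
theorem first_variation_normal
    (ψ v : (Fin 2 → ℝ) → (Fin 3 → ℝ)) (x : Fin 2 → ℝ)
    (hψ : DifferentiableAt ℝ ψ x) (hv : DifferentiableAt ℝ v x)
    (hc : crossPsi ψ x ≠ 0) :
    HasDerivAt (fun t : ℝ => nrm (fun y => ψ y + t • v y) x)
      (-((jac ψ x * (met ψ x)⁻¹ * (jac v x)ᵀ) *ᵥ nrm ψ x)) 0 := by
  classical
  set c : Fin 3 → ℝ := crossPsi ψ x with hcdef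
  set c' : Fin 3 → ℝ := crossProduct (pd v 0 x) (pd ψ 1 x) + crossProduct (pd ψ 0 x) (pd v 1 x) with hc'def
  set e : Fin 3 → ℝ := crossProduct (pd v 0 x) (pd v 1 x) with hedef
  have hpd : ∀ (t : ℝ) (i : Fin 2),
      pd (fun y => ψ y + t • v y) i x = pd ψ i x + t • pd v i x := by
    intro t i
    unfold pd
    rw [fderiv_fun_add hψ (hv.fun_const_smul t), fderiv_fun_const_smul hv t]
    simp
  have hcross : ∀ t : ℝ, crossPsi (fun y => ψ y + t • v y) x = c + t • c' + t^2 • e := by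
    intro t
    unfold crossPsi
    rw [hpd, hpd]
    funext m
    fin_cases m <;> simp [cross_apply, hcdef, hc'def, hedef, crossPsi] <;> ring
  -- scalar components
  set w : ℝ → Fin 3 → ℝ := fun t m => c m + t * c' m + t ^ 2 * e m with hwdef
  have hw0 : ∀ m, w 0 m = c m := by intro m; simp [hwdef]
  have hfun : ∀ t : ℝ, nrm (fun y => ψ y + t • v y) x
      = (Real.sqrt (∑ m, w t m * w t m))⁻¹ • w t := by
    intro t
    have hX : crossPsi (fun y => ψ y + t • v y) x = w t := by
      rw [hcross]; funext m; simp [hwdef]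
    unfold nrm norm3 dot3
    rw [hX]
  -- positivity
  have hQ0 : 0 < ∑ m, c m * c m := by
    obtain ⟨m, hm⟩ := Function.ne_iff.mp hc
    exact Finset.sum_pos' (fun i _ => mul_self_nonneg _)
      ⟨m, Finset.mem_univ m, mul_self_pos.mpr hm⟩
  set s : ℝ := Real.sqrt (∑ m, c m * c m) with hsdef
  have hs : 0 < s := Real.sqrt_pos.mpr hQ0
  have hs2 : s ^ 2 = ∑ m, c m * c m := Real.sq_sqrt hQ0.le
  -- derivatives of components
  have hlin : ∀ m, HasDerivAt (fun t : ℝ => w t m) (c' m) 0 := by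
    intro m
    have h := (((hasDerivAt_id (0:ℝ)).mul_const (c' m)).const_add (c m)).fun_add
       ((hasDerivAt_pow 2 (0:ℝ)).mul_const (e m))
    simpa [hwdef] using h
  have hQ : HasDerivAt (fun t : ℝ => ∑ m, w t m * w t m) (∑ m, (c' m * c m + c m * c' m)) 0 := by
    refine HasDerivAt.fun_sum fun m _ => ?_
    simpa [hw0] using (hlin m).fun_mul (hlin m)
  have hsq : HasDerivAt (fun t : ℝ => Real.sqrt (∑ m, w t m * w t m))
      (1 / (2 * s) * (∑ m, (c' m * c m + c m * c' m))) 0 := by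
    have h0 : (∑ m, w 0 m * w 0 m) = ∑ m, c m * c m := by simp [hw0]
    have := (Real.hasDerivAt_sqrt (x := ∑ m, w 0 m * w 0 m) (by rw [h0]; exact hQ0.ne')).comp 0 hQ
    simpa [h0, hsdef, Function.comp_def] using this
  have hinv : HasDerivAt (fun t : ℝ => (Real.sqrt (∑ m, w t m * w t m))⁻¹)
      (-(1 / (2 * s) * (∑ m, (c' m * c m + c m * c' m))) / s ^ 2) 0 := by
    have := hsq.fun_inv (by simp [hw0, ← hsdef]; exact hs.ne')
    simpa [hw0, ← hsdef] using this
  have hmain : ∀ m, HasDerivAt (fun t : ℝ => (Real.sqrt (∑ m, w t m * w t m))⁻¹ * w t m)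
      ((-(1 / (2 * s) * (∑ m, (c' m * c m + c m * c' m))) / s ^ 2) * c m + s⁻¹ * c' m) 0 := by
    intro m
    have := hinv.fun_mul (hlin m)
    simpa [hw0, ← hsdef] using this
  rw [show (fun t : ℝ => nrm (fun y => ψ y + t • v y) x)
      = fun t : ℝ => (Real.sqrt (∑ m, w t m * w t m))⁻¹ • w t from funext hfun]
  rw [hasDerivAt_pi]
  intro m
  have hval : (-((jac ψ x * (met ψ x)⁻¹ * (jac v x)ᵀ) *ᵥ nrm ψ x)) m
      = (-(1 / (2 * s) * (∑ m, (c' m * c m + c m * c' m))) / s ^ 2) * c m + s⁻¹ * c' m := by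
    have hdet : (met ψ x).det = ∑ m, c m * c m := by
      simp [met, jac, Matrix.det_fin_two, Matrix.mul_apply, Fin.sum_univ_two,
        Fin.sum_univ_three, hcdef, crossPsi, cross_apply]
      ring
    have hnrm : nrm ψ x = s⁻¹ • c := rfl
    have hinvmet : (met ψ x)⁻¹ = (s ^ 2)⁻¹ • (met ψ x).adjugate := by
      rw [Matrix.inv_def, Ring.inverse_eq_inv', hdet, ← hs2]
    have hjψ : jac ψ x = Matrix.of (fun m i => ![pd ψ 0 x, pd ψ 1 x] i m) := by
      ext m i; fin_cases i <;> simp [jac]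
    have hjv : jac v x = Matrix.of (fun m i => ![pd v 0 x, pd v 1 x] i m) := by
      ext m i; fin_cases i <;> simp [jac]
    have key : ((jac ψ x * (met ψ x).adjugate * (jac v x)ᵀ) *ᵥ c) m
        = (∑ k, c k * c' k) * c m - (∑ k, c k * c k) * c' m := by
      rw [hcdef, hc'def]
      simp only [met, crossPsi]
      rw [hjψ, hjv]
      exact key_aux _ _ _ _ m
    rw [hinvmet, hnrm]
    have hstep : (-((jac ψ x * ((s ^ 2)⁻¹ • (met ψ x).adjugate) * (jac v x)ᵀ) *ᵥ (s⁻¹ • c))) m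
        = -((s ^ 2)⁻¹ * (s⁻¹ * (((jac ψ x * (met ψ x).adjugate * (jac v x)ᵀ) *ᵥ c) m))) := by
      rw [Matrix.mul_smul, Matrix.smul_mul, Matrix.smul_mulVec, Matrix.mulVec_smul]
      simp [mul_comm]
    rw [hstep, key]
    have hsne : s ≠ 0 := hs.ne'
    rw [← hs2]
    simp only [Fin.sum_univ_three]
    field_simp
    ring
  simp only [Pi.smul_apply, smul_eq_mul, hval]
  exact hmain m


end
end
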